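/- Suppose f : R^d → R is L-smooth, and a random update satisfies E[x⁺ | x] = x − γτ∇f(x) and E[‖x⁺ − x‖² | x] ≤ γ²τ²‖∇f(x)‖² + γ²(τ/n²)∑ᵢ((1−τ)‖∇fᵢ(x)‖² + σ²) with (1/n)∑ᵢ‖∇fᵢ(x) − ∇f(x)‖² ≤ ν². Then E f(x⁺) ≤ f(x) − γτ(1 − γτL/2 − γL(1−τ)/n)‖∇f(x)‖² + γ²Lτ((1−τ)ν² + σ²/2)/n. -/

import Mathlib

open MeasureTheory
open scoped RealInnerProductSpace

/-- Non-convex descent lemma: if `f` is `L`-smooth with gradient `Gf`, the random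
update `x⁺` satisfies `E x⁺ = x − γτ∇f(x)` and
`E‖x⁺ − x‖² ≤ γ²τ²‖∇f(x)‖² + γ²(τ/n²)∑ᵢ((1 − τ)‖∇fᵢ(x)‖² + σ²)`, and
`(1/n)∑ᵢ‖∇fᵢ(x) − ∇f(x)‖² ≤ ν²`, then
`E f(x⁺) ≤ f(x) − γτ(1 − γτL/2 − γL(1 − τ)/n)‖∇f(x)‖² + γ²Lτ((1 − τ)ν² + σ²/2)/n`. -/
theorem stmt17 {d n : ℕ} (hn : 0 < n) (L γ τ σ2 ν2 : ℝ)
    (hL : 0 < L) (hγ : 0 < γ) (hτ0 : 0 < τ) (hτ1 : τ ≤ 1) (hσ : 0 ≤ σ2) (hν : 0 ≤ ν2)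
    {Ω : Type*} [MeasurableSpace Ω] (μ : Measure Ω) [IsProbabilityMeasure μ]
    (f : EuclideanSpace ℝ (Fin d) → ℝ)
    (Gf : EuclideanSpace ℝ (Fin d) → EuclideanSpace ℝ (Fin d))
    (G : Fin n → EuclideanSpace ℝ (Fin d) → EuclideanSpace ℝ (Fin d))
    (hsmooth : ∀ x y : EuclideanSpace ℝ (Fin d),
      f x ≤ f y + ⟪Gf y, x - y⟫ + L / 2 * ‖x - y‖ ^ 2)
    (x : EuclideanSpace ℝ (Fin d)) (xplus : Ω → EuclideanSpace ℝ (Fin d))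
    (hint : Integrable xplus μ)
    (hintf : Integrable (fun ω => f (xplus ω)) μ)
    (hint2 : Integrable (fun ω => ‖xplus ω - x‖ ^ 2) μ)
    (hmean : ∫ ω, xplus ω ∂μ = x - (γ * τ) • Gf x)
    (hsecond : ∫ ω, ‖xplus ω - x‖ ^ 2 ∂μ
      ≤ γ ^ 2 * τ ^ 2 * ‖Gf x‖ ^ 2
        + γ ^ 2 * (τ / (n : ℝ) ^ 2) * ∑ i, ((1 - τ) * ‖G i x‖ ^ 2 + σ2))
    (hdev : (n : ℝ)⁻¹ * ∑ i, ‖G i x - Gf x‖ ^ 2 ≤ ν2) :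
    ∫ ω, f (xplus ω) ∂μ
      ≤ f x - γ * τ * (1 - γ * τ * L / 2 - γ * L * (1 - τ) / n) * ‖Gf x‖ ^ 2
        + γ ^ 2 * L * τ * ((1 - τ) * ν2 + σ2 / 2) / n := by

  have hnpos : (0:ℝ) < n := Nat.cast_pos.mpr hn
  have hintsub : Integrable (fun ω => xplus ω - x) μ := hint.sub (integrable_const x)
  have hint_inner : Integrable (fun ω => ⟪Gf x, xplus ω - x⟫) μ := hintsub.const_inner _
  have hmono : ∫ ω, f (xplus ω) ∂μ
      ≤ ∫ ω, (f x + ⟪Gf x, xplus ω - x⟫ + L / 2 * ‖xplus ω - x‖ ^ 2) ∂μ :=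
    integral_mono hintf (((integrable_const _).add hint_inner).add (hint2.const_mul _))
      (fun ω => hsmooth _ _)
  have hinner : ∫ ω, ⟪Gf x, xplus ω - x⟫ ∂μ = -(γ * τ) * ‖Gf x‖ ^ 2 := by
    rw [integral_inner hintsub, integral_sub hint (integrable_const x), integral_const,
      probReal_univ, one_smul, hmean]
    have h3 : (x - (γ * τ) • Gf x) - x = -((γ * τ) • Gf x) := by abel
    rw [h3, inner_neg_right, real_inner_smul_right, real_inner_self_eq_norm_sq]
    ring
  have hsplit : ∫ ω, (f x + ⟪Gf x, xplus ω - x⟫ + L / 2 * ‖xplus ω - x‖ ^ 2) ∂μ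
      = f x + (-(γ * τ) * ‖Gf x‖ ^ 2) + L / 2 * ∫ ω, ‖xplus ω - x‖ ^ 2 ∂μ := by
    have hA : Integrable (fun ω => f x + ⟪Gf x, xplus ω - x⟫) μ :=
      (integrable_const _).add hint_inner
    have hB : Integrable (fun ω => L / 2 * ‖xplus ω - x‖ ^ 2) μ := hint2.const_mul (L / 2)
    rw [integral_add hA hB, integral_add (integrable_const (f x)) hint_inner, integral_const,
      probReal_univ, one_smul, hinner, integral_const_mul]
  -- bound the sum of squared gradients
  have hS : ∑ i, ‖G i x‖ ^ 2 ≤ 2 * (∑ i, ‖G i x - Gf x‖ ^ 2) + 2 * n * ‖Gf x‖ ^ 2 := by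
    have h1 : ∀ i : Fin n, ‖G i x‖ ^ 2 ≤ 2 * ‖G i x - Gf x‖ ^ 2 + 2 * ‖Gf x‖ ^ 2 := by
      intro i
      have h2 : ‖G i x‖ ≤ ‖G i x - Gf x‖ + ‖Gf x‖ := by
        calc ‖G i x‖ = ‖(G i x - Gf x) + Gf x‖ := by rw [sub_add_cancel]
          _ ≤ _ := norm_add_le _ _
      nlinarith [norm_nonneg (G i x), norm_nonneg (G i x - Gf x), norm_nonneg (Gf x),
        sq_nonneg (‖G i x - Gf x‖ - ‖Gf x‖)]
    calc ∑ i, ‖G i x‖ ^ 2 ≤ ∑ i : Fin n, (2 * ‖G i x - Gf x‖ ^ 2 + 2 * ‖Gf x‖ ^ 2) :=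
          Finset.sum_le_sum fun i _ => h1 i
      _ = 2 * (∑ i, ‖G i x - Gf x‖ ^ 2) + 2 * n * ‖Gf x‖ ^ 2 := by
          rw [Finset.sum_add_distrib, ← Finset.mul_sum, Finset.sum_const, Finset.card_fin]
          push_cast; ring
  have hD : ∑ i, ‖G i x - Gf x‖ ^ 2 ≤ n * ν2 := by
    rw [inv_mul_le_iff₀ hnpos] at hdev
    linarith
  have hS2 : ∑ i, ‖G i x‖ ^ 2 ≤ 2 * (n : ℝ) * ν2 + 2 * (n : ℝ) * ‖Gf x‖ ^ 2 :=
    hS.trans (by linarith)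
  have hsum : ∑ i, ((1 - τ) * ‖G i x‖ ^ 2 + σ2)
      ≤ (1 - τ) * (2 * n * ν2 + 2 * n * ‖Gf x‖ ^ 2) + n * σ2 := by
    have h1τ : (0:ℝ) ≤ 1 - τ := by linarith
    rw [Finset.sum_add_distrib, ← Finset.mul_sum, Finset.sum_const, Finset.card_fin,
      nsmul_eq_mul]
    have := mul_le_mul_of_nonneg_left hS2 h1τ
    linarith
  have hE2 : ∫ ω, ‖xplus ω - x‖ ^ 2 ∂μ
      ≤ γ ^ 2 * τ ^ 2 * ‖Gf x‖ ^ 2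
        + γ ^ 2 * (τ / (n : ℝ) ^ 2) * ((1 - τ) * (2 * n * ν2 + 2 * n * ‖Gf x‖ ^ 2) + n * σ2) := by
    refine hsecond.trans ?_
    gcongr
  calc ∫ ω, f (xplus ω) ∂μ
      ≤ f x + (-(γ * τ) * ‖Gf x‖ ^ 2) + L / 2 * ∫ ω, ‖xplus ω - x‖ ^ 2 ∂μ := by
        rw [← hsplit]; exact hmono
    _ ≤ f x + (-(γ * τ) * ‖Gf x‖ ^ 2) + L / 2 * (γ ^ 2 * τ ^ 2 * ‖Gf x‖ ^ 2
        + γ ^ 2 * (τ / (n : ℝ) ^ 2) * ((1 - τ) * (2 * n * ν2 + 2 * n * ‖Gf x‖ ^ 2) + n * σ2)) := by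
        gcongr
    _ = f x - γ * τ * (1 - γ * τ * L / 2 - γ * L * (1 - τ) / n) * ‖Gf x‖ ^ 2
        + γ ^ 2 * L * τ * ((1 - τ) * ν2 + σ2 / 2) / n := by
        field_simp
        ring
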